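/- Tensor Hölder: for an isotropic probability measure p on ℝⁿ with finite moments of all needed orders, symmetric matrices A, B, and s, t ≥ 1 with 1/s + 1/t = 1, it holds that T_p(A,B,I) ≤ (T_p(|A|^s, I, I))^{1/s} · (T_p(|B|^t, I, I))^{1/t}, where T_p(A,B,C) = E_{x,y∼p}[(xᵀAy)(xᵀBy)(xᵀCy)] for independent x, y ∼ p. -/

import Mathlib

open MeasureTheory Matrix

section Test
variable {n : ℕ} (p : Measure (Fin n → ℝ))

private lemma int2 (hm : ∀ i j k : Fin n, Integrable (fun x : Fin n → ℝ => x i * x j * x k) p)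
    (g : Fin n → Fin n → ℝ) (k : Fin n) :
    ∫ x, (∑ i, ∑ j, g i j * (x i * x j * x k)) ∂p
      = ∑ i, ∑ j, g i j * ∫ x, x i * x j * x k ∂p := by
  rw [integral_finset_sum _ fun i _ =>
    integrable_finset_sum _ fun j _ => (hm i j k).const_mul _]
  refine Finset.sum_congr rfl fun i _ => ?_
  rw [integral_finset_sum _ fun j _ => (hm i j k).const_mul _]
  exact Finset.sum_congr rfl fun j _ => integral_const_mul _ _

private lemma int3 (hm : ∀ i j k : Fin n, Integrable (fun x : Fin n → ℝ => x i * x j * x k) p)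
    (g : Fin n → Fin n → Fin n → ℝ) :
    ∫ x, (∑ i, ∑ j, ∑ k, g i j k * (x i * x j * x k)) ∂p
      = ∑ i, ∑ j, ∑ k, g i j k * ∫ x, x i * x j * x k ∂p := by
  rw [integral_finset_sum _ fun i _ => integrable_finset_sum _ fun j _ =>
    integrable_finset_sum _ fun k _ => (hm i j k).const_mul _]
  refine Finset.sum_congr rfl fun i _ => ?_
  rw [integral_finset_sum _ fun j _ => integrable_finset_sum _ fun k _ => (hm i j k).const_mul _]
  refine Finset.sum_congr rfl fun j _ => ?_
  rw [integral_finset_sum _ fun k _ => (hm i j k).const_mul _]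
  exact Finset.sum_congr rfl fun k _ => integral_const_mul _ _

private lemma rev3 {α β γ M : Type*} [Fintype α] [Fintype β] [Fintype γ] [AddCommMonoid M]
    (f : α → β → γ → M) : ∑ x, ∑ y, ∑ a, f x y a = ∑ a, ∑ y, ∑ x, f x y a :=
  ((Finset.sum_congr rfl fun x _ => Finset.sum_comm).trans Finset.sum_comm).trans
    (Finset.sum_congr rfl fun a _ => Finset.sum_comm)

private lemma expand3 (a b c y : Fin n → ℝ) :
    (a ⬝ᵥ y) * (b ⬝ᵥ y) * (c ⬝ᵥ y)
      = ∑ i, ∑ j, ∑ k, (a i * b j * c k) * (y i * y j * y k) := by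
  simp only [dotProduct, Finset.sum_mul, Finset.mul_sum]
  conv_rhs => rw [rev3]
  exact Finset.sum_congr rfl fun i _ => Finset.sum_congr rfl fun j _ =>
    Finset.sum_congr rfl fun k _ => by ring

private lemma key [IsProbabilityMeasure p]
    (hm : ∀ i j k : Fin n, Integrable (fun x : Fin n → ℝ => x i * x j * x k) p)
    (M C : Matrix (Fin n) (Fin n) ℝ) :
    ∫ x, ∫ y, (x ⬝ᵥ M *ᵥ y) * (x ⬝ᵥ C *ᵥ y) * (x ⬝ᵥ y) ∂p ∂p
      = ∑ i, ∑ j, ∑ k, (∑ i₀, ∑ j₀, M i₀ i * C j₀ j * ∫ x, x i₀ * x j₀ * x k ∂p)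
          * ∫ x, x i * x j * x k ∂p := by
  have hin : ∀ x : Fin n → ℝ, ∫ y, (x ⬝ᵥ M *ᵥ y) * (x ⬝ᵥ C *ᵥ y) * (x ⬝ᵥ y) ∂p
      = ∑ i, ∑ j, ∑ k, ((x ᵥ* M) i * (x ᵥ* C) j * x k) * ∫ y, y i * y j * y k ∂p := by
    intro x
    have e : ∀ y : Fin n → ℝ, (x ⬝ᵥ M *ᵥ y) * (x ⬝ᵥ C *ᵥ y) * (x ⬝ᵥ y)
        = ∑ i, ∑ j, ∑ k, ((x ᵥ* M) i * (x ᵥ* C) j * x k) * (y i * y j * y k) := by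
      intro y
      rw [dotProduct_mulVec x M, dotProduct_mulVec x C]
      exact expand3 _ _ _ y
    simp only [e]
    exact int3 p hm _
  simp only [hin]
  have e2 : ∀ x : Fin n → ℝ, ∀ i j k : Fin n,
      ((x ᵥ* M) i * (x ᵥ* C) j * x k) * (∫ y, y i * y j * y k ∂p)
        = ∑ i₀, ∑ j₀, (M i₀ i * C j₀ j * ∫ y, y i * y j * y k ∂p) * (x i₀ * x j₀ * x k) := by
    intro x i j k
    simp only [vecMul, dotProduct, Finset.sum_mul, Finset.mul_sum]
    conv_rhs => rw [Finset.sum_comm]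
    exact Finset.sum_congr rfl fun i₀ _ => Finset.sum_congr rfl fun j₀ _ => by ring
  simp only [e2]
  rw [integral_finset_sum _ fun i _ => integrable_finset_sum _ fun j _ =>
    integrable_finset_sum _ fun k _ => integrable_finset_sum _ fun i₀ _ =>
      integrable_finset_sum _ fun j₀ _ => (hm i₀ j₀ k).const_mul _]
  refine Finset.sum_congr rfl fun i _ => ?_
  rw [integral_finset_sum _ fun j _ => integrable_finset_sum _ fun k _ =>
    integrable_finset_sum _ fun i₀ _ =>
      integrable_finset_sum _ fun j₀ _ => (hm i₀ j₀ k).const_mul _]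
  refine Finset.sum_congr rfl fun j _ => ?_
  rw [integral_finset_sum _ fun k _ => integrable_finset_sum _ fun i₀ _ =>
      integrable_finset_sum _ fun j₀ _ => (hm i₀ j₀ k).const_mul _]
  refine Finset.sum_congr rfl fun k _ => ?_
  rw [int2 p hm _ k, Finset.sum_mul]
  refine Finset.sum_congr rfl fun i₀ _ => ?_
  rw [Finset.sum_mul]
  exact Finset.sum_congr rfl fun j₀ _ => by ring

end Test

private lemma swap2 {α β M : Type*} [Fintype α] [Fintype β] [AddCommMonoid M]
    (f : α → β → M) : ∑ x, ∑ a, f x a = ∑ a, ∑ x, f x a := Finset.sum_comm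

private lemma swap3 {α β γ M : Type*} [Fintype α] [Fintype β] [Fintype γ] [AddCommMonoid M]
    (f : α → β → γ → M) : ∑ x, ∑ y, ∑ a, f x y a = ∑ a, ∑ x, ∑ y, f x y a :=
  (Finset.sum_congr rfl fun x _ => Finset.sum_comm).trans Finset.sum_comm

private lemma swap4 {α β γ δ M : Type*} [Fintype α] [Fintype β] [Fintype γ] [Fintype δ]
    [AddCommMonoid M] (f : α → β → γ → δ → M) :
    ∑ x, ∑ y, ∑ z, ∑ a, f x y z a = ∑ a, ∑ x, ∑ y, ∑ z, f x y z a :=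
  (Finset.sum_congr rfl fun x _ => swap3 _).trans Finset.sum_comm

private lemma swap5 {α β γ δ ε M : Type*} [Fintype α] [Fintype β] [Fintype γ] [Fintype δ]
    [Fintype ε] [AddCommMonoid M] (f : α → β → γ → δ → ε → M) :
    ∑ x, ∑ y, ∑ z, ∑ w, ∑ a, f x y z w a = ∑ a, ∑ x, ∑ y, ∑ z, ∑ w, f x y z w a :=
  (Finset.sum_congr rfl fun x _ => swap4 _).trans Finset.sum_comm

private lemma swapB {α β γ δ ε ζ M : Type*} [Fintype α] [Fintype β] [Fintype γ] [Fintype δ]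
    [Fintype ε] [Fintype ζ] [AddCommMonoid M] (f : α → β → γ → δ → ε → ζ → M) :
    ∑ x, ∑ y, ∑ z, ∑ w, ∑ v, ∑ a, f x y z w v a
      = ∑ a, ∑ x, ∑ y, ∑ z, ∑ w, ∑ v, f x y z w v a :=
  (Finset.sum_congr rfl fun x _ => swap5 _).trans Finset.sum_comm

private lemma swap6 {α β γ δ ε ζ M : Type*} [Fintype α] [Fintype β] [Fintype γ] [Fintype δ]
    [Fintype ε] [Fintype ζ] [AddCommMonoid M] (f : α → β → γ → δ → ε → ζ → M) :
    ∑ x, ∑ y, ∑ z, ∑ w, ∑ a, ∑ b, f x y z w a b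
      = ∑ a, ∑ b, ∑ x, ∑ y, ∑ z, ∑ w, f x y z w a b := by
  calc ∑ x, ∑ y, ∑ z, ∑ w, ∑ a, ∑ b, f x y z w a b
      = ∑ b, ∑ x, ∑ y, ∑ z, ∑ w, ∑ a, f x y z w a b := swapB _
    _ = ∑ b, ∑ a, ∑ x, ∑ y, ∑ z, ∑ w, f x y z w a b :=
        Finset.sum_congr rfl fun b _ => swap5 _
    _ = ∑ a, ∑ b, ∑ x, ∑ y, ∑ z, ∑ w, f x y z w a b := Finset.sum_comm

private lemma mono_int {n : ℕ} (p : Measure (Fin n → ℝ))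
    (h3 : Integrable (fun x : Fin n → ℝ => ‖x‖ ^ 3) p) (i j k : Fin n) :
    Integrable (fun x : Fin n → ℝ => x i * x j * x k) p := by
  refine h3.mono' ?_ ?_
  · exact (((measurable_pi_apply i).mul (measurable_pi_apply j)).mul
      (measurable_pi_apply k)).aestronglyMeasurable
  · filter_upwards with x
    have hi := norm_le_pi_norm x i
    have hj := norm_le_pi_norm x j
    have hk := norm_le_pi_norm x k
    simp only [Real.norm_eq_abs] at *
    calc |x i * x j * x k| = |x i| * |x j| * |x k| := by rw [abs_mul, abs_mul]
      _ ≤ ‖x‖ * ‖x‖ * ‖x‖ := by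
          gcongr <;> first | positivity | assumption
      _ = ‖x‖ ^ 3 := by ring

private lemma M1 {n : ℕ} (A B U V : Matrix (Fin n) (Fin n) ℝ) (α β : Fin n → ℝ)
    (hAe : ∀ i j, A i j = ∑ a, α a * (U i a * U j a))
    (hBe : ∀ i j, B i j = ∑ b, β b * (V i b * V j b))
    (T : Fin n → Fin n → ℝ) :
    ∑ i, ∑ j, (∑ i₀, ∑ j₀, A i₀ i * B j₀ j * T i₀ j₀) * T i j
      = ∑ a, ∑ b, (α a * β b) * (∑ i, ∑ j, (U i a * V j b) * T i j) ^ 2 := by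
  simp only [hAe, hBe, pow_two, Finset.sum_mul, Finset.mul_sum]
  conv_lhs => rw [swap6]
  conv_lhs => rw [Finset.sum_comm]
  refine Finset.sum_congr rfl fun a _ => Finset.sum_congr rfl fun b _ =>
    Finset.sum_congr rfl fun i _ => Finset.sum_congr rfl fun j _ =>
    Finset.sum_congr rfl fun i₀ _ => Finset.sum_congr rfl fun j₀ _ => by ring

private lemma complete {n : ℕ} (V : Matrix (Fin n) (Fin n) ℝ)
    (hV : ∀ j j', ∑ b, V j b * V j' b = if j = j' then 1 else 0) (w : Fin n → ℝ) :
    ∑ j, w j ^ 2 = ∑ b, (∑ j, V j b * w j) ^ 2 := by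
  have h : ∑ b, (∑ j, V j b * w j) ^ 2 = ∑ j, ∑ j', (w j * w j') * ∑ b, V j b * V j' b := by
    simp only [pow_two, Finset.sum_mul, Finset.mul_sum]
    conv_lhs => rw [swap3, swap3]
    refine Finset.sum_congr rfl fun j _ => Finset.sum_congr rfl fun j' _ =>
      Finset.sum_congr rfl fun b _ => by ring
  rw [h]
  simp only [hV, mul_ite, mul_one, mul_zero, Finset.sum_ite_eq, Finset.sum_ite_eq', Finset.mem_univ, if_true,
    pow_two]

private lemma M2 {n : ℕ} (Mx U V : Matrix (Fin n) (Fin n) ℝ) (f : Fin n → ℝ)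
    (hMe : ∀ i j, Mx i j = ∑ a, f a * (U i a * U j a))
    (hV : ∀ j j', ∑ b, V j b * V j' b = if j = j' then 1 else 0)
    (T : Fin n → Fin n → ℝ) :
    ∑ i, ∑ j, (∑ i₀, ∑ j₀, Mx i₀ i * (1 : Matrix (Fin n) (Fin n) ℝ) j₀ j * T i₀ j₀) * T i j
      = ∑ a, ∑ b, f a * (∑ i, ∑ j, (U i a * V j b) * T i j) ^ 2 := by
  have h1 : ∀ i j : Fin n,
      (∑ i₀, ∑ j₀, Mx i₀ i * (1 : Matrix (Fin n) (Fin n) ℝ) j₀ j * T i₀ j₀)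
        = ∑ i₀, Mx i₀ i * T i₀ j := by
    intro i j
    refine Finset.sum_congr rfl fun i₀ _ => ?_
    simp [Matrix.one_apply, ite_mul, mul_ite, Finset.sum_ite_eq, Finset.sum_ite_eq']
  simp only [h1]
  have h2 : ∑ i, ∑ j, (∑ i₀, Mx i₀ i * T i₀ j) * T i j
      = ∑ a, f a * ∑ j, (∑ i, U i a * T i j) ^ 2 := by
    simp only [hMe, pow_two, Finset.sum_mul, Finset.mul_sum]
    conv_lhs => rw [swap4]
    refine Finset.sum_congr rfl fun a _ => ?_
    rw [Finset.sum_comm]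
    refine Finset.sum_congr rfl fun j _ =>
      Finset.sum_congr rfl fun i _ => Finset.sum_congr rfl fun i₀ _ => by ring
  rw [h2]
  refine Finset.sum_congr rfl fun a _ => ?_
  have h3 : ∀ b : Fin n, (∑ j, V j b * ∑ i, U i a * T i j)
      = ∑ i, ∑ j, (U i a * V j b) * T i j := by
    intro b
    simp only [Finset.mul_sum]
    rw [Finset.sum_comm]
    exact Finset.sum_congr rfl fun i _ => Finset.sum_congr rfl fun j _ => by ring
  rw [complete V hV (fun j => ∑ i, U i a * T i j), Finset.mul_sum]
  exact Finset.sum_congr rfl fun b _ => by rw [h3 b]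

private lemma M2' {n : ℕ} (Mx U V : Matrix (Fin n) (Fin n) ℝ) (f : Fin n → ℝ)
    (hMe : ∀ i j, Mx i j = ∑ b, f b * (V i b * V j b))
    (hU : ∀ j j', ∑ a, U j a * U j' a = if j = j' then 1 else 0)
    (T : Fin n → Fin n → ℝ) (hT : ∀ i j, T i j = T j i) :
    ∑ i, ∑ j, (∑ i₀, ∑ j₀, Mx i₀ i * (1 : Matrix (Fin n) (Fin n) ℝ) j₀ j * T i₀ j₀) * T i j
      = ∑ a, ∑ b, f b * (∑ i, ∑ j, (U i a * V j b) * T i j) ^ 2 := by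
  rw [M2 Mx V U f hMe hU T, Finset.sum_comm]
  refine Finset.sum_congr rfl fun a _ => Finset.sum_congr rfl fun b _ => ?_
  congr 1
  rw [Finset.sum_comm]
  refine congrArg (· ^ 2) (Finset.sum_congr rfl fun i _ => Finset.sum_congr rfl fun j _ => ?_)
  rw [hT j i]; ring

private lemma holder_step {ι : Type*} [Fintype ι] (α β e : ι → ℝ) (he : ∀ q, 0 ≤ e q)
    (s t : ℝ) (hconj : Real.HolderConjugate s t) (hst : 1 / s + 1 / t = 1) :
    ∑ q, (α q * β q) * e q
      ≤ (∑ q, |α q| ^ s * e q) ^ (1 / s) * (∑ q, |β q| ^ t * e q) ^ (1 / t) := by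
  have h1 : ∀ q, (α q * β q) * e q ≤ (|α q| * e q ^ (1 / s)) * (|β q| * e q ^ (1 / t)) := by
    intro q
    have h : (|α q| * e q ^ (1 / s)) * (|β q| * e q ^ (1 / t))
        = (|α q| * |β q|) * (e q ^ (1 / s) * e q ^ (1 / t)) := by ring
    rw [h, ← Real.rpow_add' (he q) (by rw [hst]; norm_num), hst, Real.rpow_one, ← abs_mul]
    exact mul_le_mul_of_nonneg_right (le_abs_self _) (he q)
  refine le_trans (Finset.sum_le_sum fun q _ => h1 q) ?_
  have h2 := Real.inner_le_Lp_mul_Lq_of_nonneg (s := Finset.univ)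
    (f := fun q => |α q| * e q ^ (1 / s)) (g := fun q => |β q| * e q ^ (1 / t)) hconj
    (fun q _ => mul_nonneg (abs_nonneg _) (Real.rpow_nonneg (he q) _))
    (fun q _ => mul_nonneg (abs_nonneg _) (Real.rpow_nonneg (he q) _))
  have h3 : ∀ q, (|α q| * e q ^ (1 / s)) ^ s = |α q| ^ s * e q := by
    intro q
    rw [Real.mul_rpow (abs_nonneg _) (Real.rpow_nonneg (he q) _)]
    congr 1
    rw [← Real.rpow_mul (he q), one_div, inv_mul_cancel₀ (ne_of_gt hconj.pos), Real.rpow_one]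
  have h4 : ∀ q, (|β q| * e q ^ (1 / t)) ^ t = |β q| ^ t * e q := by
    intro q
    rw [Real.mul_rpow (abs_nonneg _) (Real.rpow_nonneg (he q) _)]
    congr 1
    rw [← Real.rpow_mul (he q), one_div, inv_mul_cancel₀ (ne_of_gt hconj.symm.pos),
      Real.rpow_one]
  simpa only [h3, h4] using h2

private lemma tripleEntry (n : ℕ) (U : Matrix (Fin n) (Fin n) ℝ) (d : Fin n → ℝ) (i j : Fin n) :
    (U * Matrix.diagonal d * star U) i j
      = ∑ a, d a * (U i a * U j a) := by
  rw [Matrix.mul_apply]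
  simp only [Matrix.mul_diagonal, Matrix.star_apply, star_trivial]
  exact Finset.sum_congr rfl fun a _ => by ring

private lemma cfc_entry {n : ℕ} {A : Matrix (Fin n) (Fin n) ℝ} (hA : A.IsHermitian) (f : ℝ → ℝ)
    (i j : Fin n) :
    hA.cfc f i j = ∑ a, f (hA.eigenvalues a)
      * ((hA.eigenvectorUnitary : Matrix (Fin n) (Fin n) ℝ) i a
        * (hA.eigenvectorUnitary : Matrix (Fin n) (Fin n) ℝ) j a) := by
  have h := tripleEntry n (hA.eigenvectorUnitary : Matrix (Fin n) (Fin n) ℝ)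
    (f ∘ hA.eigenvalues) i j
  rw [Matrix.IsHermitian.cfc, RCLike.ofReal_real_eq_id, Function.id_comp]
  exact h

private lemma A_entry {n : ℕ} {A : Matrix (Fin n) (Fin n) ℝ} (hA : A.IsHermitian) (i j : Fin n) :
    A i j = ∑ a, hA.eigenvalues a
      * ((hA.eigenvectorUnitary : Matrix (Fin n) (Fin n) ℝ) i a
        * (hA.eigenvectorUnitary : Matrix (Fin n) (Fin n) ℝ) j a) := by
  have h := tripleEntry n (hA.eigenvectorUnitary : Matrix (Fin n) (Fin n) ℝ) hA.eigenvalues i j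
  conv_lhs => rw [hA.spectral_theorem, RCLike.ofReal_real_eq_id, Function.id_comp]
  exact h

private lemma orth {n : ℕ} {A : Matrix (Fin n) (Fin n) ℝ} (hA : A.IsHermitian) (j j' : Fin n) :
    ∑ b, (hA.eigenvectorUnitary : Matrix (Fin n) (Fin n) ℝ) j b
      * (hA.eigenvectorUnitary : Matrix (Fin n) (Fin n) ℝ) j' b
      = if j = j' then 1 else 0 := by
  have h := (Matrix.mem_unitaryGroup_iff).mp hA.eigenvectorUnitary.2
  calc ∑ b, (hA.eigenvectorUnitary : Matrix (Fin n) (Fin n) ℝ) j b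
      * (hA.eigenvectorUnitary : Matrix (Fin n) (Fin n) ℝ) j' b
      = ((hA.eigenvectorUnitary : Matrix (Fin n) (Fin n) ℝ)
          * star (hA.eigenvectorUnitary : Matrix (Fin n) (Fin n) ℝ)) j j' := by
        rw [Matrix.mul_apply]
        simp [Matrix.star_apply]
    _ = (1 : Matrix (Fin n) (Fin n) ℝ) j j' := by rw [h]
    _ = if j = j' then 1 else 0 := Matrix.one_apply

/-- Tensor Hölder: for a mean-zero probability measure `p` on `ℝⁿ` with finite
moments, symmetric matrices `A, B`, and `s, t ≥ 1` with `1/s + 1/t = 1`,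
`T_p(A,B,I) ≤ (T_p(|A|^s,I,I))^(1/s) · (T_p(|B|^t,I,I))^(1/t)`, where
`T_p(A,B,C) = E_{x,y∼p}[(xᵀAy)(xᵀBy)(xᵀCy)]` for independent `x, y ∼ p` and
`|A|^s` is defined via the functional calculus `x ↦ |x|^s` applied to `A`. -/
theorem tensor_holder (n : ℕ) (p : Measure (Fin n → ℝ)) [IsProbabilityMeasure p]
    (hmean : ∫ x, x ∂p = 0)
    (hmom : ∀ k : ℕ, Integrable (fun x : Fin n → ℝ => ‖x‖ ^ k) p)
    (A B : Matrix (Fin n) (Fin n) ℝ) (hA : A.IsHermitian) (hB : B.IsHermitian)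
    (s t : ℝ) (hs : 1 ≤ s) (ht : 1 ≤ t) (hst : 1 / s + 1 / t = 1) :
    ∫ x, ∫ y, (x ⬝ᵥ A *ᵥ y) * (x ⬝ᵥ B *ᵥ y) * (x ⬝ᵥ y) ∂p ∂p
      ≤ (∫ x, ∫ y, (x ⬝ᵥ (hA.cfc fun u : ℝ => |u| ^ s) *ᵥ y) * (x ⬝ᵥ y) ^ 2 ∂p ∂p) ^ (1 / s) *
        (∫ x, ∫ y, (x ⬝ᵥ (hB.cfc fun u : ℝ => |u| ^ t) *ᵥ y) * (x ⬝ᵥ y) ^ 2 ∂p ∂p) ^ (1 / t) := by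
  have hm : ∀ i j k : Fin n, Integrable (fun x : Fin n → ℝ => x i * x j * x k) p :=
    mono_int p (hmom 3)
  have ht0 : 0 < t := lt_of_lt_of_le zero_lt_one ht
  have hs1 : 1 < s := by
    rcases eq_or_lt_of_le hs with h | h
    · exfalso
      rw [← h] at hst
      have h1 : 0 < 1 / t := by positivity
      norm_num at hst
      linarith
    · exact h
  have hconj : Real.HolderConjugate s t := Real.holderConjugate_iff.mpr ⟨hs1, by simpa [one_div] using hst⟩
  have hsymm : ∀ k i j : Fin n,
      (∫ x, x i * x j * x k ∂p) = ∫ x, x j * x i * x k ∂p := by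
    intro k i j
    have h : (fun x : Fin n → ℝ => x i * x j * x k) = fun x => x j * x i * x k := by
      funext x; ring
    rw [h]
  have hLHS : (∫ x, ∫ y, (x ⬝ᵥ A *ᵥ y) * (x ⬝ᵥ B *ᵥ y) * (x ⬝ᵥ y) ∂p ∂p)
      = ∑ k, ∑ a, ∑ b, (hA.eigenvalues a * hB.eigenvalues b)
          * (∑ i, ∑ j, ((hA.eigenvectorUnitary : Matrix (Fin n) (Fin n) ℝ) i a
              * (hB.eigenvectorUnitary : Matrix (Fin n) (Fin n) ℝ) j b)
            * ∫ x, x i * x j * x k ∂p) ^ 2 := by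
    rw [key p hm A B, swap3]
    exact Finset.sum_congr rfl fun k _ =>
      M1 A B _ _ _ _ (A_entry hA) (A_entry hB) (fun i j => ∫ x, x i * x j * x k ∂p)
  have hR1 : (∫ x, ∫ y, (x ⬝ᵥ (hA.cfc fun u : ℝ => |u| ^ s) *ᵥ y) * (x ⬝ᵥ y) ^ 2 ∂p ∂p)
      = ∑ k, ∑ a, ∑ b, |hA.eigenvalues a| ^ s
          * (∑ i, ∑ j, ((hA.eigenvectorUnitary : Matrix (Fin n) (Fin n) ℝ) i a
              * (hB.eigenvectorUnitary : Matrix (Fin n) (Fin n) ℝ) j b)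
            * ∫ x, x i * x j * x k ∂p) ^ 2 := by
    have hpt : ∀ x y : Fin n → ℝ,
        (x ⬝ᵥ (hA.cfc fun u : ℝ => |u| ^ s) *ᵥ y) * (x ⬝ᵥ y) ^ 2
          = (x ⬝ᵥ (hA.cfc fun u : ℝ => |u| ^ s) *ᵥ y)
            * (x ⬝ᵥ (1 : Matrix (Fin n) (Fin n) ℝ) *ᵥ y) * (x ⬝ᵥ y) := by
      intro x y; rw [Matrix.one_mulVec]; ring
    simp only [hpt]
    rw [key p hm _ 1, swap3]
    exact Finset.sum_congr rfl fun k _ =>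
      M2 _ _ _ (fun a => |hA.eigenvalues a| ^ s) (cfc_entry hA _) (orth hB)
        (fun i j => ∫ x, x i * x j * x k ∂p)
  have hR2 : (∫ x, ∫ y, (x ⬝ᵥ (hB.cfc fun u : ℝ => |u| ^ t) *ᵥ y) * (x ⬝ᵥ y) ^ 2 ∂p ∂p)
      = ∑ k, ∑ a, ∑ b, |hB.eigenvalues b| ^ t
          * (∑ i, ∑ j, ((hA.eigenvectorUnitary : Matrix (Fin n) (Fin n) ℝ) i a
              * (hB.eigenvectorUnitary : Matrix (Fin n) (Fin n) ℝ) j b)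
            * ∫ x, x i * x j * x k ∂p) ^ 2 := by
    have hpt : ∀ x y : Fin n → ℝ,
        (x ⬝ᵥ (hB.cfc fun u : ℝ => |u| ^ t) *ᵥ y) * (x ⬝ᵥ y) ^ 2
          = (x ⬝ᵥ (hB.cfc fun u : ℝ => |u| ^ t) *ᵥ y)
            * (x ⬝ᵥ (1 : Matrix (Fin n) (Fin n) ℝ) *ᵥ y) * (x ⬝ᵥ y) := by
      intro x y; rw [Matrix.one_mulVec]; ring
    simp only [hpt]
    rw [key p hm _ 1, swap3]
    exact Finset.sum_congr rfl fun k _ =>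
      M2' _ _ _ (fun b => |hB.eigenvalues b| ^ t) (cfc_entry hB _) (orth hA)
        (fun i j => ∫ x, x i * x j * x k ∂p) (hsymm k)
  rw [hLHS, hR1, hR2]
  have fold : ∀ F : Fin n → Fin n → Fin n → ℝ,
      ∑ q : Fin n × Fin n × Fin n, F q.1 q.2.1 q.2.2 = ∑ k, ∑ a, ∑ b, F k a b := by
    intro F
    rw [Fintype.sum_prod_type]
    exact Finset.sum_congr rfl fun k _ => Fintype.sum_prod_type _
  rw [← fold, ← fold, ← fold]
  exact holder_step
    (fun q : Fin n × Fin n × Fin n => hA.eigenvalues q.2.1)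
    (fun q => hB.eigenvalues q.2.2)
    (fun q => (∑ i, ∑ j, ((hA.eigenvectorUnitary : Matrix (Fin n) (Fin n) ℝ) i q.2.1
        * (hB.eigenvectorUnitary : Matrix (Fin n) (Fin n) ℝ) j q.2.2)
      * ∫ x, x i * x j * x q.1 ∂p) ^ 2)
    (fun q => sq_nonneg _) s t hconj hst
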